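/- Let g ≥ 1, let λ_0, …, λ_{2g+1} be complex numbers with f(x) = ∑_{k=0}^{2g+1} λ_k x^k, let x_1, …, x_g be pairwise distinct complex numbers, and let e_1 ≠ e_3 be complex numbers each different from every x_r. Set F(t) = ∏_{r=1}^g (t − x_r). For each r let ψ_r(t) = f(t) / ((e_1 − t)(e_3 − t) (∏_{s≠r}(t − x_s))^2). Then ∑_{r=1}^g ψ_r'(x_r) = −(f(e_1)/F(e_1)^2 − f(e_3)/F(e_3)^2)/(e_1 − e_3) + λ_{2g+1}, where ψ_r' denotes the derivative of the one-variable rational function ψ_r. -/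

import Mathlib

open Finset Polynomial

/-- If `a` is a root of `p` and of its derivative, then `(X - C a)^2 ∣ p`. -/
lemma sq_dvd_of_double_root (p : Polynomial ℂ) (a : ℂ)
    (h0 : p.eval a = 0) (h1 : (Polynomial.derivative p).eval a = 0) :
    (Polynomial.X - Polynomial.C a) ^ 2 ∣ p := by
  obtain ⟨q, hq⟩ := Polynomial.dvd_iff_isRoot.2 h0
  have hq' : q.eval a = 0 := by
    have := h1
    rw [hq, Polynomial.derivative_mul] at this
    simpa using this
  obtain ⟨m, hm⟩ := Polynomial.dvd_iff_isRoot.2 hq'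
  exact ⟨m, by rw [hq, hm]; ring⟩

/-- With `f(x) = ∑_{k=0}^{2g+1} λ_k x^k`, pairwise distinct `x_1, …, x_g`,
`e_1 ≠ e_3` distinct from all `x_r`, `F(t) = ∏ (t − x_r)`, and
`ψ_r(t) = f(t)/((e_1−t)(e_3−t)(∏_{s≠r}(t−x_s))²)`:
`∑_r ψ_r'(x_r) = −(f(e_1)/F(e_1)² − f(e_3)/F(e_3)²)/(e_1−e_3) + λ_{2g+1}`. -/
theorem sum_deriv_two_poles
    (g : ℕ) (hg : 1 ≤ g) (l : ℕ → ℂ)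
    (f : ℂ → ℂ) (hf : ∀ t, f t = ∑ k ∈ Finset.range (2 * g + 2), l k * t ^ k)
    (x : Fin g → ℂ) (hx : Function.Injective x)
    (e1 e3 : ℂ) (he : e1 ≠ e3) (he1 : ∀ r, e1 ≠ x r) (he3 : ∀ r, e3 ≠ x r)
    (F : ℂ → ℂ) (hF : ∀ t, F t = ∏ r, (t - x r))
    (ψ : Fin g → ℂ → ℂ)
    (hψ : ∀ r t, ψ r t =
      f t / ((e1 - t) * (e3 - t) * (∏ s ∈ univ.erase r, (t - x s)) ^ 2)) :
    ∑ r, deriv (ψ r) (x r) =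
      -((f e1 / (F e1) ^ 2 - f e3 / (F e3) ^ 2) / (e1 - e3)) + l (2 * g + 1) := by
  classical
  -- the polynomials
  set fp : Polynomial ℂ := ∑ k ∈ Finset.range (2 * g + 2), C (l k) * X ^ k with hfp
  set Fp : Polynomial ℂ := ∏ r, (X - C (x r)) with hFp
  set Gq : Fin g → Polynomial ℂ := fun r => ∏ s ∈ univ.erase r, (X - C (x s)) with hGq
  set Gp : Fin g → Polynomial ℂ := fun r => (X - C e1) * (X - C e3) * (Gq r) ^ 2 with hGp
  -- evaluations
  have hfe : ∀ t, f t = fp.eval t := by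
    intro t
    rw [hf]
    simp [hfp, Polynomial.eval_finset_sum]
  have hFe : ∀ t, F t = Fp.eval t := by
    intro t
    rw [hF]
    simp [hFp, Polynomial.eval_prod]
  have hge : ∀ r t, (Gp r).eval t
      = (e1 - t) * (e3 - t) * (∏ s ∈ univ.erase r, (t - x s)) ^ 2 := by
    intro r t
    simp only [hGp, hGq, Polynomial.eval_mul, Polynomial.eval_pow, Polynomial.eval_sub,
      Polynomial.eval_X, Polynomial.eval_C, Polynomial.eval_prod]
    ring
  have hψ' : ∀ r, ψ r = fun t => fp.eval t / (Gp r).eval t := by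
    intro r
    funext t
    rw [hψ, hge, hfe]
  -- nonvanishing facts
  have hxr : ∀ r : Fin g, ∀ s ∈ univ.erase r, x r - x s ≠ 0 := by
    intro r s hs
    have : s ≠ r := (Finset.mem_erase.1 hs).1
    exact sub_ne_zero.2 fun h => this (hx h.symm)
  have hgx : ∀ r, (Gp r).eval (x r) ≠ 0 := by
    intro r
    rw [hge]
    apply mul_ne_zero
    apply mul_ne_zero
    · exact sub_ne_zero.2 (he1 r)
    · exact sub_ne_zero.2 (he3 r)
    · exact pow_ne_zero _ (Finset.prod_ne_zero_iff.2 (hxr r))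
  -- the derivative of ψ r at x r
  have hdiff : ∀ p : Polynomial ℂ, ∀ t : ℂ, DifferentiableAt ℂ (fun y => p.eval y) t :=
    fun p t => (Polynomial.differentiable p) t
  have hd' : ∀ r, deriv (ψ r) (x r) = ((Polynomial.derivative fp).eval (x r) * (Gp r).eval (x r)
      - fp.eval (x r) * (Polynomial.derivative (Gp r)).eval (x r)) / ((Gp r).eval (x r)) ^ 2 := by
    intro r
    rw [hψ' r, deriv_fun_div (hdiff fp (x r)) (hdiff (Gp r) (x r)) (hgx r)]
    rw [Polynomial.deriv, Polynomial.deriv]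
  have hkey : ∀ r, (Polynomial.derivative fp).eval (x r)
      = deriv (ψ r) (x r) * (Gp r).eval (x r)
        + (fp.eval (x r) / (Gp r).eval (x r)) * (Polynomial.derivative (Gp r)).eval (x r) := by
    intro r
    have hB := hgx r
    rw [hd' r]
    generalize (Gp r).eval (x r) = B at hB ⊢
    generalize fp.eval (x r) = A
    generalize (Polynomial.derivative fp).eval (x r) = A'
    generalize (Polynomial.derivative (Gp r)).eval (x r) = B'
    field_simp
    ring
  -- constants and the difference polynomial N
  set u : ℂ := fp.eval e1 / ((e1 - e3) * (Fp.eval e1) ^ 2) with hu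
  set v : ℂ := fp.eval e3 / ((e3 - e1) * (Fp.eval e3) ^ 2) with hv
  set T : Fin g → Polynomial ℂ := fun r =>
    (C (fp.eval (x r) / (Gp r).eval (x r)) + C (deriv (ψ r) (x r)) * (X - C (x r))) * Gp r with hT
  set N : Polynomial ℂ := fp - C u * ((X - C e3) * Fp ^ 2) - C v * ((X - C e1) * Fp ^ 2)
    - ∑ r, T r with hN
  have hFe1 : Fp.eval e1 ≠ 0 := by
    rw [hFp, Polynomial.eval_prod]
    exact Finset.prod_ne_zero_iff.2 fun r _ => by
      simpa using sub_ne_zero.2 (he1 r)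
  have hFe3 : Fp.eval e3 ≠ 0 := by
    rw [hFp, Polynomial.eval_prod]
    exact Finset.prod_ne_zero_iff.2 fun r _ => by
      simpa using sub_ne_zero.2 (he3 r)
  have hee : e1 - e3 ≠ 0 := sub_ne_zero.2 he
  have hee' : e3 - e1 ≠ 0 := sub_ne_zero.2 (Ne.symm he)
  -- (X - C e1) divides N
  have hdvd1 : (X - C e1) ∣ N := by
    have hsplit : N = (fp - C u * ((X - C e3) * Fp ^ 2))
        - (C v * ((X - C e1) * Fp ^ 2) + ∑ r, T r) := by rw [hN]; ring
    rw [hsplit]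
    apply dvd_sub
    · rw [Polynomial.dvd_iff_isRoot]
      have : (fp - C u * ((X - C e3) * Fp ^ 2)).eval e1
          = fp.eval e1 - u * ((e1 - e3) * (Fp.eval e1) ^ 2) := by simp
      rw [Polynomial.IsRoot.def, this, hu]
      field_simp
      ring
    · apply dvd_add
      · exact Dvd.dvd.mul_left (dvd_mul_of_dvd_left (dvd_refl _) _) _
      · apply Finset.dvd_sum
        intro r _
        rw [hT]
        exact Dvd.dvd.mul_left (dvd_mul_of_dvd_left (dvd_mul_right _ _) _) _
  -- (X - C e3) divides N
  have hdvd3 : (X - C e3) ∣ N := by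
    have hsplit : N = (fp - C v * ((X - C e1) * Fp ^ 2))
        - (C u * ((X - C e3) * Fp ^ 2) + ∑ r, T r) := by rw [hN]; ring
    rw [hsplit]
    apply dvd_sub
    · rw [Polynomial.dvd_iff_isRoot]
      have : (fp - C v * ((X - C e1) * Fp ^ 2)).eval e3
          = fp.eval e3 - v * ((e3 - e1) * (Fp.eval e3) ^ 2) := by simp
      rw [Polynomial.IsRoot.def, this, hv]
      field_simp
      ring
    · apply dvd_add
      · exact Dvd.dvd.mul_left (dvd_mul_of_dvd_left (dvd_refl _) _) _
      · apply Finset.dvd_sum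
        intro r _
        rw [hT]
        exact Dvd.dvd.mul_left (dvd_mul_of_dvd_left (dvd_mul_left _ _) _) _
  -- (X - C (x r))^2 divides N
  have hdvdr : ∀ r, (X - C (x r)) ^ 2 ∣ N := by
    intro r
    have hsplit : N = (fp - T r) - (C u * ((X - C e3) * Fp ^ 2)
        + C v * ((X - C e1) * Fp ^ 2) + ∑ s ∈ univ.erase r, T s) := by
      rw [hN, ← Finset.add_sum_erase _ _ (Finset.mem_univ r)]
      ring
    rw [hsplit]
    apply dvd_sub
    · apply sq_dvd_of_double_root
      · have : (fp - T r).eval (x r)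
            = fp.eval (x r) - (fp.eval (x r) / (Gp r).eval (x r)
              + deriv (ψ r) (x r) * (x r - x r)) * (Gp r).eval (x r) := by simp [hT]
        rw [this, sub_self, mul_zero, add_zero, div_mul_cancel₀ _ (hgx r), sub_self]
      · rw [Polynomial.derivative_sub, hT, Polynomial.derivative_mul]
        have h2 : Polynomial.derivative (C (fp.eval (x r) / (Gp r).eval (x r))
            + C (deriv (ψ r) (x r)) * (X - C (x r))) = C (deriv (ψ r) (x r)) := by
          simp
        rw [h2]
        simp only [Polynomial.eval_sub, Polynomial.eval_add, Polynomial.eval_mul,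
          Polynomial.eval_C, Polynomial.eval_X]
        rw [hkey r]
        ring
    · have hFdvd : (X - C (x r)) ^ 2 ∣ Fp ^ 2 :=
        pow_dvd_pow_of_dvd (Finset.dvd_prod_of_mem (fun s => X - C (x s)) (Finset.mem_univ r)) 2
      apply dvd_add
      apply dvd_add
      · exact Dvd.dvd.mul_left (dvd_mul_of_dvd_right hFdvd _) _
      · exact Dvd.dvd.mul_left (dvd_mul_of_dvd_right hFdvd _) _
      · apply Finset.dvd_sum
        intro s hs
        have hrs : r ∈ univ.erase s := by
          simp only [Finset.mem_erase, Finset.mem_univ, and_true]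
          exact fun h => (Finset.mem_erase.1 hs).1 h.symm
        have : (X - C (x r)) ^ 2 ∣ Gq s ^ 2 :=
          pow_dvd_pow_of_dvd (Finset.dvd_prod_of_mem (fun t => X - C (x t)) hrs) 2
        rw [hT]
        exact Dvd.dvd.mul_left (dvd_mul_of_dvd_right this _) _
  -- combine: the full product divides N
  have cop : ∀ a b : ℂ, a ≠ b → IsCoprime (X - C a : Polynomial ℂ) (X - C b) := fun a b h =>
    Polynomial.isCoprime_X_sub_C_of_isUnit_sub (sub_ne_zero.2 h).isUnit
  have hprodvd : (∏ r, (X - C (x r)) ^ 2 : Polynomial ℂ) ∣ N := by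
    apply Finset.prod_dvd_of_coprime
    · intro a _ b _ hab
      exact (cop _ _ fun h => hab (hx h)).pow
    · intro r _
      exact hdvdr r
  have hwdvd : ((X - C e1) * (X - C e3)) * ∏ r, (X - C (x r)) ^ 2 ∣ N := by
    apply IsCoprime.mul_dvd
    · apply IsCoprime.mul_left
      · exact IsCoprime.prod_right fun r _ => (cop _ _ (he1 r)).pow_right
      · exact IsCoprime.prod_right fun r _ => (cop _ _ (he3 r)).pow_right
    · exact (cop _ _ he).mul_dvd hdvd1 hdvd3
    · exact hprodvd
  -- degrees
  have hFmon : Fp.Monic := monic_prod_of_monic _ _ fun r _ => monic_X_sub_C _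
  have hGqmon : ∀ r, (Gq r).Monic := fun r => monic_prod_of_monic _ _ fun s _ => monic_X_sub_C _
  have hGqdeg : ∀ r, (Gq r).natDegree = g - 1 := by
    intro r
    rw [hGq]
    rw [Polynomial.natDegree_prod _ _ fun s _ => Polynomial.X_sub_C_ne_zero _]
    simp [Polynomial.natDegree_X_sub_C, Finset.card_erase_of_mem]
  have hGpmon : ∀ r, (Gp r).Monic := fun r =>
    ((monic_X_sub_C e1).mul (monic_X_sub_C e3)).mul ((hGqmon r).pow 2)
  have hGpdeg : ∀ r, (Gp r).natDegree = 2 * g := by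
    intro r
    rw [hGp]
    rw [((monic_X_sub_C e1).mul (monic_X_sub_C e3)).natDegree_mul ((hGqmon r).pow 2),
      (monic_X_sub_C e1).natDegree_mul (monic_X_sub_C e3),
      Polynomial.natDegree_pow, Polynomial.natDegree_X_sub_C, Polynomial.natDegree_X_sub_C,
      hGqdeg r]
    omega
  have hFdeg : Fp.natDegree = g := by
    rw [hFp, Polynomial.natDegree_prod _ _ fun s _ => Polynomial.X_sub_C_ne_zero _]
    simp [Polynomial.natDegree_X_sub_C]
  -- degree of N is at most 2g+1
  have hfpdeg : fp.natDegree ≤ 2 * g + 1 := by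
    apply Polynomial.natDegree_sum_le_of_forall_le
    intro k hk
    refine (Polynomial.natDegree_C_mul_le _ _).trans ?_
    rw [Polynomial.natDegree_X_pow]
    have := Finset.mem_range.1 hk
    omega
  have hdeg13 : ((X - C e3) * Fp ^ 2).natDegree = 2 * g + 1 := by
    rw [(monic_X_sub_C e3).natDegree_mul (hFmon.pow 2), Polynomial.natDegree_X_sub_C,
      Polynomial.natDegree_pow, hFdeg]
    omega
  have hdeg11 : ((X - C e1) * Fp ^ 2).natDegree = 2 * g + 1 := by
    rw [(monic_X_sub_C e1).natDegree_mul (hFmon.pow 2), Polynomial.natDegree_X_sub_C,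
      Polynomial.natDegree_pow, hFdeg]
    omega
  have hTdeg : ∀ r, (T r).natDegree ≤ 2 * g + 1 := by
    intro r
    rw [hT]
    refine (Polynomial.natDegree_mul_le).trans ?_
    have h1 : (C (fp.eval (x r) / (Gp r).eval (x r))
        + C (deriv (ψ r) (x r)) * (X - C (x r))).natDegree ≤ 1 := by
      refine (Polynomial.natDegree_add_le _ _).trans ?_
      simp only [Polynomial.natDegree_C, max_le_iff]
      refine ⟨Nat.zero_le _, (Polynomial.natDegree_C_mul_le _ _).trans ?_⟩
      rw [Polynomial.natDegree_X_sub_C]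
    have h2 := hGpdeg r
    omega
  have hNdeg : N.natDegree ≤ 2 * g + 1 := by
    rw [hN]
    refine (Polynomial.natDegree_sub_le _ _).trans ?_
    rw [max_le_iff]
    constructor
    · refine (Polynomial.natDegree_sub_le _ _).trans ?_
      rw [max_le_iff]
      constructor
      · refine (Polynomial.natDegree_sub_le _ _).trans ?_
        rw [max_le_iff]
        exact ⟨hfpdeg, (Polynomial.natDegree_C_mul_le _ _).trans (le_of_eq hdeg13)⟩
      · exact (Polynomial.natDegree_C_mul_le _ _).trans (le_of_eq hdeg11)
    · exact Polynomial.natDegree_sum_le_of_forall_le _ _ fun r _ => hTdeg r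
  -- the big divisor is monic of degree 2g+2, so N = 0
  have hWmon : (((X - C e1) * (X - C e3)) * ∏ r, (X - C (x r)) ^ 2 : Polynomial ℂ).Monic :=
    ((monic_X_sub_C e1).mul (monic_X_sub_C e3)).mul
      (monic_prod_of_monic _ _ fun r _ => (monic_X_sub_C _).pow 2)
  have hWdeg : (((X - C e1) * (X - C e3)) * ∏ r, (X - C (x r)) ^ 2 : Polynomial ℂ).natDegree
      = 2 * g + 2 := by
    rw [((monic_X_sub_C e1).mul (monic_X_sub_C e3)).natDegree_mul
        (monic_prod_of_monic _ _ fun r _ => (monic_X_sub_C _).pow 2),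
      (monic_X_sub_C e1).natDegree_mul (monic_X_sub_C e3),
      Polynomial.natDegree_prod _ _ fun r _ => pow_ne_zero _ (Polynomial.X_sub_C_ne_zero _)]
    simp [Polynomial.natDegree_pow, Polynomial.natDegree_X_sub_C]
    omega
  have hNz : N = 0 := by
    apply Polynomial.eq_zero_of_dvd_of_degree_lt hwdvd
    calc N.degree ≤ (N.natDegree : WithBot ℕ) := Polynomial.degree_le_natDegree
    _ ≤ ((2 * g + 1 : ℕ) : WithBot ℕ) := by exact_mod_cast hNdeg
    _ < ((2 * g + 2 : ℕ) : WithBot ℕ) := by exact_mod_cast Nat.lt_succ_self _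
    _ = _ := by rw [← hWdeg, Polynomial.degree_eq_natDegree hWmon.ne_zero]
  -- extract the coefficient of X^(2g+1)
  have hco : fp.coeff (2 * g + 1) = l (2 * g + 1) := by
    rw [hfp, Polynomial.finset_sum_coeff]
    simp only [Polynomial.coeff_C_mul, Polynomial.coeff_X_pow, mul_ite, mul_one, mul_zero]
    rw [Finset.sum_ite_eq (Finset.range (2 * g + 2)) (2 * g + 1) l]
    simp
  have h13co : ((X - C e3) * Fp ^ 2).coeff (2 * g + 1) = 1 := by
    rw [← hdeg13]
    exact ((monic_X_sub_C e3).mul (hFmon.pow 2)).coeff_natDegree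
  have h11co : ((X - C e1) * Fp ^ 2).coeff (2 * g + 1) = 1 := by
    rw [← hdeg11]
    exact ((monic_X_sub_C e1).mul (hFmon.pow 2)).coeff_natDegree
  have hTco : ∀ r, (T r).coeff (2 * g + 1) = deriv (ψ r) (x r) := by
    intro r
    have hTsplit : T r = C (fp.eval (x r) / (Gp r).eval (x r)) * Gp r
        + C (deriv (ψ r) (x r)) * ((X - C (x r)) * Gp r) := by rw [hT]; ring
    rw [hTsplit, Polynomial.coeff_add, Polynomial.coeff_C_mul, Polynomial.coeff_C_mul]
    have h1 : (Gp r).coeff (2 * g + 1) = 0 :=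
      Polynomial.coeff_eq_zero_of_natDegree_lt (by rw [hGpdeg r]; omega)
    have hdegr : ((X - C (x r)) * Gp r).natDegree = 2 * g + 1 := by
      rw [(monic_X_sub_C _).natDegree_mul (hGpmon r), Polynomial.natDegree_X_sub_C, hGpdeg r]
      omega
    have h2 : ((X - C (x r)) * Gp r).coeff (2 * g + 1) = 1 := by
      rw [← hdegr]
      exact ((monic_X_sub_C _).mul (hGpmon r)).coeff_natDegree
    rw [h1, h2]
    ring
  have e0 : N.coeff (2 * g + 1) = l (2 * g + 1) - u - v - ∑ r, deriv (ψ r) (x r) := by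
    rw [hN, Polynomial.coeff_sub, Polynomial.coeff_sub, Polynomial.coeff_sub,
      Polynomial.coeff_C_mul, Polynomial.coeff_C_mul, hco, h13co, h11co,
      Polynomial.finset_sum_coeff, Finset.sum_congr rfl fun r _ => hTco r, mul_one, mul_one]
  have hmain : l (2 * g + 1) - u - v - ∑ r, deriv (ψ r) (x r) = 0 := by
    rw [← e0, hNz, Polynomial.coeff_zero]
  -- conclude
  have hsum : ∑ r, deriv (ψ r) (x r) = l (2 * g + 1) - u - v := by
    linear_combination -hmain
  rw [hsum, hfe e1, hfe e3, hFe e1, hFe e3, hu, hv]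
  field_simp
  ring
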